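/- Let g be a map, w a point, and G_m a subset of the m-th preimage set g^{-m}(w). For 1 ≤ j ≤ m set G_{m-j} := g^j(G_m), and call a point p ∈ G_{m-j} branching if g^{-1}(p) ∩ G_{m-j+1} has at least 2 elements. For y ∈ G_m let T_m(y) := {0 ≤ j ≤ m-1 : g^{j+1}(y) is branching}. Suppose that every fiber of g has cardinality at most D (e.g. D = d^{qk}) and that Card T_m(y) ≤ s for every y ∈ G_m. Then Card G_m ≤ D^s. -/

import Mathlib

private lemma card_filter_range_succ (n : ℕ) (p : ℕ → Prop) [DecidablePred p] :
    ((Finset.range (n+1)).filter p).card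
      = ((Finset.range n).filter (fun j => p (j+1))).card + (if p 0 then 1 else 0) := by
  rw [Finset.card_filter, Finset.card_filter, Finset.sum_range_succ']

private lemma aux0 {X : Type*} [DecidableEq X] (g : X → X) (w : X) (D : ℕ)
    (hD : ∀ (S : Finset X) (p : X), (S.filter (fun x => g x = p)).card ≤ D)
    (hD0 : D ≠ 0) :
    ∀ m (G : Finset X), (∀ y ∈ G, g^[m] y = w) →
      ∑ y ∈ G, ((D : NNReal))⁻¹ ^
        (((Finset.range m).filter (fun j =>
          2 ≤ ((G.image (g^[j])).filter (fun x => g x = g^[j+1] y)).card)).card) ≤ 1 := by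
  intro m
  induction m with
  | zero =>
      intro G hG
      have hsub : G ⊆ {w} := by
        intro y hy
        have h := hG y hy
        simp only [Function.iterate_zero, id] at h
        simp [h]
      have hcard : G.card ≤ 1 := by
        have := Finset.card_le_card hsub
        simpa using this
      simp only [Finset.range_zero, Finset.filter_empty, Finset.card_empty, pow_zero,
        Finset.sum_const, nsmul_eq_mul, mul_one]
      exact_mod_cast hcard
  | succ n ih =>
      intro G hG
      have hDne : (D : NNReal) ≠ 0 := by exact_mod_cast hD0
      have hDu : (D : NNReal) * (D : NNReal)⁻¹ = 1 := mul_inv_cancel₀ hDne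
      have hG' : ∀ y ∈ G.image g, g^[n] y = w := by
        intro y hy
        obtain ⟨x, hx, rfl⟩ := Finset.mem_image.mp hy
        have := hG x hx
        rwa [Function.iterate_succ_apply] at this
      -- the summand is a function of `g y`
      have step1 : ∑ y ∈ G, ((D : NNReal))⁻¹ ^
            (((Finset.range (n+1)).filter (fun j =>
              2 ≤ ((G.image (g^[j])).filter (fun x => g x = g^[j+1] y)).card)).card)
          = ∑ y ∈ G, (fun p => ((D : NNReal))⁻¹ ^
            (((Finset.range (n+1)).filter (fun j =>
              2 ≤ ((G.image (g^[j])).filter (fun x => g x = g^[j] p)).card)).card)) (g y) := by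
        apply Finset.sum_congr rfl
        intro y _
        simp only [Function.iterate_succ_apply]
        rfl
      rw [step1, Finset.sum_comp (fun p => ((D : NNReal))⁻¹ ^
            (((Finset.range (n+1)).filter (fun j =>
              2 ≤ ((G.image (g^[j])).filter (fun x => g x = g^[j] p)).card)).card)) g]
      -- bound each fiber's contribution
      have step2 : ∀ p ∈ G.image g,
          (G.filter (fun a => g a = p)).card • (fun p => ((D : NNReal))⁻¹ ^
            (((Finset.range (n+1)).filter (fun j =>
              2 ≤ ((G.image (g^[j])).filter (fun x => g x = g^[j] p)).card)).card)) p
          ≤ ((D : NNReal))⁻¹ ^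
            ((((Finset.range n)).filter (fun j =>
              2 ≤ (((G.image g).image (g^[j])).filter
                (fun x => g x = g^[j+1] p)).card)).card) := by
        intro p _
        simp only
        have himg : ∀ j : ℕ, (G.image g).image (g^[j]) = G.image (g^[j+1]) := by
          intro j
          rw [Finset.image_image, ← Function.iterate_succ]
        have hsplit : (((Finset.range (n+1)).filter (fun j =>
              2 ≤ ((G.image (g^[j])).filter (fun x => g x = g^[j] p)).card)).card)
            = ((((Finset.range n)).filter (fun j =>
              2 ≤ (((G.image g).image (g^[j])).filter
                (fun x => g x = g^[j+1] p)).card)).card)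
              + (if 2 ≤ ((G.filter (fun x => g x = p)).card) then 1 else 0) := by
          rw [card_filter_range_succ]
          congr 1
          · apply congrArg
            apply Finset.filter_congr
            intro j _
            rw [himg j]
          · congr 1
            simp [Function.iterate_zero]
        rw [hsplit]
        by_cases hb : 2 ≤ (G.filter (fun x => g x = p)).card
        · rw [if_pos hb, pow_succ, nsmul_eq_mul]
          calc ((G.filter (fun a => g a = p)).card : NNReal) *
                (((D:NNReal))⁻¹ ^ _ * ((D:NNReal))⁻¹)
              ≤ (D : NNReal) * (((D:NNReal))⁻¹ ^ _ * ((D:NNReal))⁻¹) := by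
                apply mul_le_mul_left
                exact_mod_cast hD G p
            _ = ((D : NNReal) * ((D:NNReal))⁻¹) * ((D:NNReal))⁻¹ ^ _ := by ring
            _ = ((D:NNReal))⁻¹ ^ _ := by rw [hDu, one_mul]
        · rw [if_neg hb, add_zero, nsmul_eq_mul]
          have h1 : (G.filter (fun a => g a = p)).card ≤ 1 := by omega
          calc ((G.filter (fun a => g a = p)).card : NNReal) * ((D:NNReal))⁻¹ ^ _
              ≤ 1 * ((D:NNReal))⁻¹ ^ _ := by
                apply mul_le_mul_left
                exact_mod_cast h1
            _ = _ := one_mul _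
      calc ∑ p ∈ G.image g, (G.filter (fun a => g a = p)).card • (fun p => ((D : NNReal))⁻¹ ^
            (((Finset.range (n+1)).filter (fun j =>
              2 ≤ ((G.image (g^[j])).filter (fun x => g x = g^[j] p)).card)).card)) p
          ≤ ∑ p ∈ G.image g, ((D : NNReal))⁻¹ ^
            ((((Finset.range n)).filter (fun j =>
              2 ≤ (((G.image g).image (g^[j])).filter
                (fun x => g x = g^[j+1] p)).card)).card) := Finset.sum_le_sum step2
        _ ≤ 1 := ih (G.image g) hG'

/-- Misiurewicz–Przytycki style counting in the preimage tree.
`Gm` is a finite set of `m`-th preimages of `w` under `g`. For `0 ≤ j ≤ m-1`, the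
point `g^[j+1] y` lies in `G_{m-j-1} = g^[j+1] '' Gm`; it is *branching* if at least two
points of `G_{m-j} = g^[j] '' Gm` are mapped to it by `g`. If every fiber of `g` has at
most `D` points and every `y ∈ Gm` has at most `s` branching times, then `Card Gm ≤ D^s`. -/
theorem stmt0 {X : Type*} [DecidableEq X] (g : X → X) (w : X) (D s m : ℕ)
    (Gm : Finset X) (hGm : ∀ y ∈ Gm, g^[m] y = w)
    (hD : ∀ (S : Finset X) (p : X), (S.filter (fun x => g x = p)).card ≤ D)
    (hbranch : ∀ y ∈ Gm,
      ((Finset.range m).filter (fun j =>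
        2 ≤ ((Gm.image (g^[j])).filter (fun x => g x = g^[j+1] y)).card)).card ≤ s) :
    Gm.card ≤ D ^ s := by
  rcases Finset.eq_empty_or_nonempty Gm with h | ⟨y0, hy0⟩
  · simp [h]
  · have hD0 : D ≠ 0 := by
      intro h0
      have := hD {y0} (g y0)
      simp [h0, Finset.filter_singleton] at this
    have hDne : (D : NNReal) ≠ 0 := by exact_mod_cast hD0
    have hD1 : (1 : NNReal) ≤ (D : NNReal) := by
      exact_mod_cast Nat.one_le_iff_ne_zero.mpr hD0
    have hu1 : ((D : NNReal))⁻¹ ≤ 1 := by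
      rw [inv_le_one_iff₀]
      right; exact hD1
    have haux := aux0 g w D hD hD0 m Gm hGm
    have h1 : (Gm.card : NNReal) * ((D : NNReal))⁻¹ ^ s ≤ 1 := by
      calc (Gm.card : NNReal) * ((D : NNReal))⁻¹ ^ s
          = ∑ _y ∈ Gm, ((D : NNReal))⁻¹ ^ s := by rw [Finset.sum_const, nsmul_eq_mul]
        _ ≤ ∑ y ∈ Gm, ((D : NNReal))⁻¹ ^
            (((Finset.range m).filter (fun j =>
              2 ≤ ((Gm.image (g^[j])).filter (fun x => g x = g^[j+1] y)).card)).card) := by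
            apply Finset.sum_le_sum
            intro y hy
            exact pow_le_pow_of_le_one zero_le hu1 (hbranch y hy)
        _ ≤ 1 := haux
    have h2 : (Gm.card : NNReal) ≤ (D : NNReal) ^ s := by
      calc (Gm.card : NNReal)
          = ((Gm.card : NNReal) * ((D : NNReal))⁻¹ ^ s) * (D : NNReal) ^ s := by
            rw [mul_assoc, ← mul_pow, inv_mul_cancel₀ hDne, one_pow, mul_one]
        _ ≤ 1 * (D : NNReal) ^ s := mul_le_mul_left h1 _
        _ = (D : NNReal) ^ s := one_mul _
    exact_mod_cast h2
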